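/- Soundness with function variables: extend matching to carry a function substitution φ (a finite map from function variables F to symbols of Σ), with declarative rule: (θ,φ) ⊢ F(p1,…,pn) ≈ f(t1,…,tn) iff φ(F)=f and (θ,φ) ⊢ pi ≈ ti for all i. Extend the machine states with φ and add rules binding F↦f when F is unbound, continuing when φ(F)=f, and backtracking when φ(F)=g≠f or the arities mismatch. Then if the machine started from (∅, ∅, [], [match p t]) reaches success(θ,φ), the declarative judgment (θ,φ) ⊢ p ≈ t holds. -/

import Mathlib

namespace PyPM

inductive Tm where
  | app : String → List Tm → Tm

/-- Patterns over a signature, with function variables F applied to arguments. -/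
inductive Pat where
  | var : String → Pat
  | app : String → List Pat → Pat
  | fvarApp : String → List Pat → Pat
  | alt : Pat → Pat → Pat

/-- Substitutions: finite maps from pattern variables to terms. -/
abbrev Subst := String → Option Tm

/-- Function substitutions: finite maps from function variables to function symbols. -/
abbrev FSubst := String → Option String

def emptySubst : Subst := fun _ => none
def emptyFSubst : FSubst := fun _ => none

def Subst.update (θ : Subst) (x : String) (t : Tm) : Subst :=
  fun y => if y = x then some t else θ y

def FSubst.update (φ : FSubst) (F f : String) : FSubst :=
  fun G => if G = F then some f else φ G

/-- θ ⊆ θ' : every binding of θ is a binding of θ'. -/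
def Subst.le (θ θ' : Subst) : Prop := ∀ x t, θ x = some t → θ' x = some t

/-- φ ⊆ φ' : every binding of φ is a binding of φ'. -/
def FSubst.le (φ φ' : FSubst) : Prop := ∀ F f, φ F = some f → φ' F = some f

/-- Declarative matching semantics with function variables: (θ, φ) ⊢ p ≈ t. -/
inductive Matches : Subst → FSubst → Pat → Tm → Prop where
  | var {θ φ x t} :
      θ x = some t → Matches θ φ (.var x) t
  | app {θ φ f} {ps : List Pat} {ts : List Tm}
      (hlen : ps.length = ts.length)
      (hargs : ∀ i (h1 : i < ps.length) (h2 : i < ts.length), Matches θ φ ps[i] ts[i]) :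
      Matches θ φ (.app f ps) (.app f ts)
  | fvarApp {θ : Subst} {φ : FSubst} {F f : String} {ps : List Pat} {ts : List Tm}
      (hF : φ F = some f)
      (hlen : ps.length = ts.length)
      (hargs : ∀ i (h1 : i < ps.length) (h2 : i < ts.length), Matches θ φ ps[i] ts[i]) :
      Matches θ φ (.fvarApp F ps) (.app f ts)
  | alt1 {θ φ p p' t} :
      Matches θ φ p t → Matches θ φ (.alt p p') t
  | alt2 {θ φ p p' t} :
      Matches θ φ p' t → Matches θ φ (.alt p p') t

inductive Action where
  | doMatch : Pat → Tm → Action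

abbrev Cont := List Action
abbrev Frame := Subst × FSubst × Cont
abbrev Stack := List Frame

inductive St where
  | success : Subst → FSubst → St
  | failure : St
  | running : Subst → FSubst → Stack → Cont → St

def backtrack : Stack → St
  | [] => .failure
  | (θ, φ, k) :: stk => .running θ φ stk k

/-- The step relation of the machine with function variables. -/
inductive Step : St → St → Prop where
  | success {θ φ stk} :
      Step (.running θ φ stk []) (.success θ φ)
  | varBind {θ : Subst} {φ stk x t k} :
      θ x = none →
      Step (.running θ φ stk (.doMatch (.var x) t :: k)) (.running (θ.update x t) φ stk k)
  | varBound {θ : Subst} {φ stk x t k} :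
      θ x = some t →
      Step (.running θ φ stk (.doMatch (.var x) t :: k)) (.running θ φ stk k)
  | varConflict {θ : Subst} {φ stk x t t' k} :
      θ x = some t' → t' ≠ t →
      Step (.running θ φ stk (.doMatch (.var x) t :: k)) (backtrack stk)
  | fn {θ φ stk f ps ts k} :
      ps.length = ts.length →
      Step (.running θ φ stk (.doMatch (.app f ps) (.app f ts) :: k))
           (.running θ φ stk (((ps.zip ts).map fun pt => .doMatch pt.1 pt.2) ++ k))
  | fnConflict {θ φ stk f g ps ts k} :
      f ≠ g ∨ ps.length ≠ ts.length →
      Step (.running θ φ stk (.doMatch (.app f ps) (.app g ts) :: k)) (backtrack stk)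
  | fvarBind {θ : Subst} {φ : FSubst} {stk F f ps ts k} :
      φ F = none →
      ps.length = ts.length →
      Step (.running θ φ stk (.doMatch (.fvarApp F ps) (.app f ts) :: k))
           (.running θ (φ.update F f) stk
             (((ps.zip ts).map fun pt => .doMatch pt.1 pt.2) ++ k))
  | fvarBound {θ : Subst} {φ : FSubst} {stk F f ps ts k} :
      φ F = some f →
      ps.length = ts.length →
      Step (.running θ φ stk (.doMatch (.fvarApp F ps) (.app f ts) :: k))
           (.running θ φ stk (((ps.zip ts).map fun pt => .doMatch pt.1 pt.2) ++ k))
  | fvarConflict {θ : Subst} {φ : FSubst} {stk F f g ps ts k} :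
      (φ F = some g ∧ g ≠ f) ∨ ps.length ≠ ts.length →
      Step (.running θ φ stk (.doMatch (.fvarApp F ps) (.app f ts) :: k)) (backtrack stk)
  | alt {θ φ stk p p' t k} :
      Step (.running θ φ stk (.doMatch (.alt p p') t :: k))
           (.running θ φ ((θ, φ, .doMatch p' t :: k) :: stk) (.doMatch p t :: k))

end PyPM

open PyPM

namespace PyPMProof

def ActOK (θf : Subst) (φf : FSubst) : Action → Prop
  | .doMatch p t => Matches θf φf p t

def GoodK (θf : Subst) (φf : FSubst) (k : Cont) : Prop := ∀ a ∈ k, ActOK θf φf a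

def GoodF (θf : Subst) (φf : FSubst) : Frame → Prop :=
  fun fr => fr.1.le θf ∧ fr.2.1.le φf ∧ GoodK θf φf fr.2.2

def PSt (θf : Subst) (φf : FSubst) : St → Prop
  | .success θ φ => θ = θf ∧ φ = φf
  | .failure => False
  | .running θ φ stk k =>
      (θ.le θf ∧ φ.le φf ∧ GoodK θf φf k) ∨ ∃ fr ∈ stk, GoodF θf φf fr

lemma trans_has_step {α} {r : α → α → Prop} {s b : α}
    (h : Relation.TransGen r s b) : ∃ c, r s c := by
  induction h with
  | single h => exact ⟨_, h⟩
  | tail _ _ ih => exact ih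

lemma subst_le_refl (θ : Subst) : θ.le θ := fun _ _ h => h
lemma fsubst_le_refl (φ : FSubst) : φ.le φ := fun _ _ h => h

lemma subst_le_of_update {θ θf : Subst} {x t} (hx : θ x = none)
    (h : (θ.update x t).le θf) : θ.le θf := by
  intro y u hy
  apply h
  unfold Subst.update
  split
  · next heq => rw [heq] at hy; rw [hx] at hy; exact absurd hy (by simp)
  · exact hy

lemma fsubst_le_of_update {φ φf : FSubst} {F f} (hF : φ F = none)
    (h : (φ.update F f).le φf) : φ.le φf := by
  intro G g hG
  apply h
  unfold FSubst.update
  split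
  · next heq => rw [heq] at hG; rw [hF] at hG; exact absurd hG (by simp)
  · exact hG

lemma goodK_zip {θf φf} {ps : List Pat} {ts : List Tm} {k : Cont}
    (hlen : ps.length = ts.length)
    (hk : GoodK θf φf (((ps.zip ts).map fun pt => .doMatch pt.1 pt.2) ++ k)) :
    (∀ i (h1 : i < ps.length) (h2 : i < ts.length), Matches θf φf ps[i] ts[i]) ∧
      GoodK θf φf k := by
  constructor
  · intro i h1 h2
    have hi : i < (ps.zip ts).length := by
      simp [List.length_zip]; omega
    have hmem : (Action.doMatch ps[i] ts[i]) ∈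
        (ps.zip ts).map fun pt => Action.doMatch pt.1 pt.2 := by
      refine List.mem_map.2 ⟨(ps.zip ts)[i], List.getElem_mem hi, ?_⟩
      simp [List.getElem_zip]
    exact hk _ (List.mem_append.2 (.inl hmem))
  · intro a ha
    exact hk _ (List.mem_append.2 (.inr ha))

lemma backtrack_ne_success {stk θ φ} : backtrack stk ≠ St.success θ φ := by
  cases stk with
  | nil => simp [backtrack]
  | cons fr rest => obtain ⟨a, b, c⟩ := fr; simp [backtrack]

lemma step_to_success {θf φf s} (h : Step s (.success θf φf)) : PSt θf φf s := by
  generalize hfin : St.success θf φf = fin at h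
  cases h with
  | success =>
    cases hfin
    exact Or.inl ⟨subst_le_refl _, fsubst_le_refl _, fun a ha => by cases ha⟩
  | varBind _ => cases hfin
  | varBound _ => cases hfin
  | fn _ => cases hfin
  | fvarBind _ _ => cases hfin
  | fvarBound _ _ => cases hfin
  | alt => cases hfin
  | varConflict _ _ => exact absurd hfin.symm backtrack_ne_success
  | fnConflict _ => exact absurd hfin.symm backtrack_ne_success
  | fvarConflict _ => exact absurd hfin.symm backtrack_ne_success

lemma no_step_backtrack_nil {c} (h : Step (backtrack []) c) : False := by
  change Step St.failure c at h
  cases h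

lemma main {θf φf} : ∀ s, Relation.TransGen Step s (.success θf φf) → PSt θf φf s := by
  intro s h
  induction h using Relation.TransGen.head_induction_on with
  | single hstep => exact step_to_success hstep
  | head hstep htrans ihp =>
    cases hstep with
    | success =>
      obtain ⟨c, hc⟩ := trans_has_step htrans
      cases hc
    | varBind hx =>
      rcases ihp with ⟨h1, h2, h3⟩ | ⟨fr, hfr, hg⟩
      · refine Or.inl ⟨subst_le_of_update hx h1, h2, ?_⟩
        intro a ha
        rcases List.mem_cons.1 ha with rfl | ha
        · exact Matches.var (h1 _ _ (by simp [Subst.update]))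
        · exact h3 _ ha
      · exact Or.inr ⟨fr, hfr, hg⟩
    | varBound hx =>
      rcases ihp with ⟨h1, h2, h3⟩ | ⟨fr, hfr, hg⟩
      · refine Or.inl ⟨h1, h2, ?_⟩
        intro a ha
        rcases List.mem_cons.1 ha with rfl | ha
        · exact Matches.var (h1 _ _ hx)
        · exact h3 _ ha
      · exact Or.inr ⟨fr, hfr, hg⟩
    | varConflict hx hne =>
      rename_i θ0 φ0 stk x0 t0 t0' k0
      cases stk with
        | nil =>
          obtain ⟨c, hc⟩ := trans_has_step htrans
          exact absurd hc (fun h => no_step_backtrack_nil h)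
        | cons fr rest =>
          obtain ⟨θ1, φ1, k1⟩ := fr
          rcases ihp with ⟨h1, h2, h3⟩ | ⟨fr', hfr', hg⟩
          · exact Or.inr ⟨(θ1, φ1, k1), List.mem_cons_self, h1, h2, h3⟩
          · exact Or.inr ⟨fr', List.mem_cons_of_mem _ hfr', hg⟩
    | fn hlen =>
      rcases ihp with ⟨h1, h2, h3⟩ | ⟨fr, hfr, hg⟩
      · obtain ⟨hargs, hk⟩ := goodK_zip hlen h3
        refine Or.inl ⟨h1, h2, ?_⟩
        intro a ha
        rcases List.mem_cons.1 ha with rfl | ha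
        · exact Matches.app hlen hargs
        · exact hk _ ha
      · exact Or.inr ⟨fr, hfr, hg⟩
    | fnConflict hc =>
      rename_i θ0 φ0 stk f0 g0 ps0 ts0 k0
      cases stk with
        | nil =>
          obtain ⟨c, hc⟩ := trans_has_step htrans
          exact absurd hc (fun h => no_step_backtrack_nil h)
        | cons fr rest =>
          obtain ⟨θ1, φ1, k1⟩ := fr
          rcases ihp with ⟨h1, h2, h3⟩ | ⟨fr', hfr', hg⟩
          · exact Or.inr ⟨(θ1, φ1, k1), List.mem_cons_self, h1, h2, h3⟩
          · exact Or.inr ⟨fr', List.mem_cons_of_mem _ hfr', hg⟩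
    | fvarBind hF hlen =>
      rcases ihp with ⟨h1, h2, h3⟩ | ⟨fr, hfr, hg⟩
      · obtain ⟨hargs, hk⟩ := goodK_zip hlen h3
        refine Or.inl ⟨h1, fsubst_le_of_update hF h2, ?_⟩
        intro a ha
        rcases List.mem_cons.1 ha with rfl | ha
        · exact Matches.fvarApp (h2 _ _ (by simp [FSubst.update])) hlen hargs
        · exact hk _ ha
      · exact Or.inr ⟨fr, hfr, hg⟩
    | fvarBound hF hlen =>
      rcases ihp with ⟨h1, h2, h3⟩ | ⟨fr, hfr, hg⟩
      · obtain ⟨hargs, hk⟩ := goodK_zip hlen h3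
        refine Or.inl ⟨h1, h2, ?_⟩
        intro a ha
        rcases List.mem_cons.1 ha with rfl | ha
        · exact Matches.fvarApp (h2 _ _ hF) hlen hargs
        · exact hk _ ha
      · exact Or.inr ⟨fr, hfr, hg⟩
    | fvarConflict hc =>
      rename_i θ0 φ0 stk F0 f0 g0 ps0 ts0 k0
      cases stk with
        | nil =>
          obtain ⟨c, hc⟩ := trans_has_step htrans
          exact absurd hc (fun h => no_step_backtrack_nil h)
        | cons fr rest =>
          obtain ⟨θ1, φ1, k1⟩ := fr
          rcases ihp with ⟨h1, h2, h3⟩ | ⟨fr', hfr', hg⟩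
          · exact Or.inr ⟨(θ1, φ1, k1), List.mem_cons_self, h1, h2, h3⟩
          · exact Or.inr ⟨fr', List.mem_cons_of_mem _ hfr', hg⟩
    | alt =>
      rcases ihp with ⟨h1, h2, h3⟩ | ⟨fr, hfr, hg⟩
      · refine Or.inl ⟨h1, h2, ?_⟩
        intro a ha
        rcases List.mem_cons.1 ha with rfl | ha
        · exact Matches.alt1 (h3 _ (List.mem_cons_self))
        · exact h3 _ (List.mem_cons_of_mem _ ha)
      · rcases List.mem_cons.1 hfr with rfl | hfr
        · obtain ⟨g1, g2, g3⟩ := hg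
          refine Or.inl ⟨g1, g2, ?_⟩
          intro a ha
          rcases List.mem_cons.1 ha with rfl | ha
          · exact Matches.alt2 (g3 _ (List.mem_cons_self))
          · exact g3 _ (List.mem_cons_of_mem _ ha)
        · exact Or.inr ⟨fr, hfr, hg⟩

end PyPMProof

/-- Soundness of the machine with function variables (success case). -/
theorem fvar_soundness_success {p : Pat} {t : Tm} {θ : Subst} {φ : FSubst}
    (h : Relation.TransGen Step (.running emptySubst emptyFSubst [] [.doMatch p t])
          (.success θ φ)) :
    Matches θ φ p t := by
  have hp := PyPMProof.main _ h
  rcases hp with ⟨_, _, h3⟩ | ⟨fr, hfr, _⟩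
  · exact h3 _ (List.mem_cons_self)
  · cases hfr
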